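/- If η : ℝ → ℝ is a nonnegative integrable probability density with finite second moment, then ∫ η(x) log η(x) dx ≥ -(2√π/e) · (1 + ∫ x² η(x) dx)^{1/2} (whenever the entropy integral is well-defined). -/

import Mathlib

open Real MeasureTheory
open scoped ENNReal

lemma key_pointwise (s : ℝ) (hs : 0 ≤ s) :
    -(2 / Real.exp 1) * Real.sqrt s ≤ s * Real.log s := by
  rcases eq_or_lt_of_le hs with h | h
  · simp [← h]
  · set u := Real.sqrt s with hu
    have hu0 : 0 < u := Real.sqrt_pos.2 h
    have hs' : s = u ^ 2 := (Real.sq_sqrt hs).symm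
    have hlog : Real.log s = 2 * Real.log u := by
      rw [hs', Real.log_pow]; push_cast; ring
    have h1 : -Real.exp (-1) ≤ u * Real.log u := by
      have h2 := Real.add_one_le_exp (-1 - Real.log u)
      have he : Real.exp (-1 - Real.log u) = Real.exp (-1) / u := by
        rw [Real.exp_sub, Real.exp_log hu0]
      rw [he] at h2
      have h3 : -Real.log u ≤ Real.exp (-1) / u := by linarith
      have h4 : u * (-Real.log u) ≤ u * (Real.exp (-1) / u) :=
        mul_le_mul_of_nonneg_left h3 hu0.le
      rw [mul_div_cancel₀ _ hu0.ne'] at h4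
      linarith
    calc -(2 / Real.exp 1) * u = (2 * u) * (-Real.exp (-1)) := by
          rw [Real.exp_neg]; field_simp
      _ ≤ (2 * u) * (u * Real.log u) := by
          apply mul_le_mul_of_nonneg_left (by linarith) (by positivity)
      _ = s * Real.log s := by rw [hs', Real.log_pow]; push_cast; ring

theorem stmt1 (η : ℝ → ℝ) (hpos : ∀ x, 0 ≤ η x)
    (hint : Integrable η) (hmass : ∫ x, η x = 1)
    (hmom : Integrable (fun x => x ^ 2 * η x))
    (hent : Integrable (fun x => η x * Real.log (η x))) :
    ∫ x, η x * Real.log (η x) ≥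
      -(2 * Real.sqrt π / Real.exp 1) * Real.sqrt (1 + ∫ x, x ^ 2 * η x) := by
  set F : ℝ → ℝ := fun x => Real.sqrt (η x * (1 + x ^ 2)) with hF
  set G : ℝ → ℝ := fun x => Real.sqrt ((1 + x ^ 2)⁻¹) with hG
  have hq : ∀ x : ℝ, (0:ℝ) < 1 + x ^ 2 := fun x => by positivity
  have hGcont : Continuous G :=
    Real.continuous_sqrt.comp ((continuous_const.add (continuous_pow 2)).inv₀
      fun x => (hq x).ne')
  have hFmeas : AEStronglyMeasurable F volume :=
    (Real.continuous_sqrt.comp_aestronglyMeasurable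
      (hint.aestronglyMeasurable.mul
        ((continuous_const.add (continuous_pow 2)).aestronglyMeasurable)))
  have hFsq : ∀ x, F x ^ 2 = η x * (1 + x ^ 2) := fun x =>
    Real.sq_sqrt (mul_nonneg (hpos x) (hq x).le)
  have hGsq : ∀ x, G x ^ 2 = (1 + x ^ 2)⁻¹ := fun x =>
    Real.sq_sqrt (inv_nonneg.2 (hq x).le)
  have hF2int : Integrable (fun x => F x ^ 2) := by
    refine (hint.add hmom).congr (Filter.Eventually.of_forall fun x => ?_)
    show η x + x ^ 2 * η x = F x ^ 2
    rw [hFsq]; ring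
  have hG2int : Integrable (fun x => G x ^ 2) := by
    refine integrable_inv_one_add_sq.congr (Filter.Eventually.of_forall fun x => ?_)
    show (1 + x ^ 2)⁻¹ = G x ^ 2
    rw [hGsq]
  have hFmem : MemLp F 2 := (memLp_two_iff_integrable_sq hFmeas).2 hF2int
  have hGmem : MemLp G 2 := (memLp_two_iff_integrable_sq hGcont.aestronglyMeasurable).2 hG2int
  have hFG : ∀ x, F x * G x = Real.sqrt (η x) := fun x => by
    rw [hF, hG, ← Real.sqrt_mul (mul_nonneg (hpos x) (hq x).le), mul_assoc,
      mul_inv_cancel₀ (hq x).ne', mul_one]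
  -- integrability of sqrt η
  have hsqrt_int : Integrable (fun x => Real.sqrt (η x)) := by
    have hpqr : (1 : ℝ≥0∞) / 1 = 1 / 2 + 1 / 2 := by
      simp [ENNReal.inv_two_add_inv_two]
    have hmul : MemLp (G • F) 1 := hFmem.smul hGmem (hpqr := ⟨by simp [ENNReal.inv_two_add_inv_two]⟩)
    refine (memLp_one_iff_integrable.mp hmul).congr (Filter.Eventually.of_forall fun x => ?_)
    simp only [Pi.smul_apply', Pi.smul_apply, smul_eq_mul]
    rw [mul_comm, hFG]
  -- Hölder / Cauchy-Schwarz
  have hconj : (2:ℝ).HolderConjugate 2 := Real.holderConjugate_iff.mpr ⟨one_lt_two, by norm_num⟩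
  have hof : ENNReal.ofReal (2:ℝ) = 2 := by norm_num
  have hCS := MeasureTheory.integral_mul_le_Lp_mul_Lq_of_nonneg hconj
    (Filter.Eventually.of_forall fun x => Real.sqrt_nonneg _)
    (Filter.Eventually.of_forall fun x => Real.sqrt_nonneg _)
    (hof ▸ hFmem) (hof ▸ hGmem)
  have hrpow2 : ∀ f : ℝ → ℝ, (fun x => f x ^ (2:ℝ)) = fun x => f x ^ (2:ℕ) := fun f => by
    funext x
    rw [show (2:ℝ) = ((2:ℕ):ℝ) by norm_num, Real.rpow_natCast]
  rw [hrpow2 F, hrpow2 G] at hCS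
  have hintF2 : ∫ x, F x ^ (2:ℕ) = 1 + ∫ x, x ^ 2 * η x := by
    rw [show (fun x => F x ^ (2:ℕ)) = fun x => η x + x ^ 2 * η x from
      funext fun x => by rw [hFsq]; ring]
    rw [integral_add hint hmom, hmass]
  have hintG2 : ∫ x, G x ^ (2:ℕ) = π := by
    rw [show (fun x => G x ^ (2:ℕ)) = fun x : ℝ => (1 + x ^ 2)⁻¹ from funext fun x => hGsq x]
    exact integral_univ_inv_one_add_sq
  rw [hintF2, hintG2] at hCS
  have hCS' : ∫ x, Real.sqrt (η x) ≤
      Real.sqrt (1 + ∫ x, x ^ 2 * η x) * Real.sqrt π := by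
    have hM : (0:ℝ) ≤ ∫ x, x ^ 2 * η x :=
      integral_nonneg fun x => mul_nonneg (sq_nonneg x) (hpos x)
    calc ∫ x, Real.sqrt (η x) = ∫ x, F x * G x := by
          exact integral_congr_ae (Filter.Eventually.of_forall fun x => (hFG x).symm)
      _ ≤ (1 + ∫ x, x ^ 2 * η x) ^ (1/(2:ℝ)) * π ^ (1/(2:ℝ)) := hCS
      _ = Real.sqrt (1 + ∫ x, x ^ 2 * η x) * Real.sqrt π := by
          rw [← Real.sqrt_eq_rpow, ← Real.sqrt_eq_rpow]
  -- pointwise bound and conclusion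
  have hmono : ∫ x, (-(2 / Real.exp 1) * Real.sqrt (η x)) ≤ ∫ x, η x * Real.log (η x) :=
    integral_mono (hsqrt_int.const_mul _) hent fun x => key_pointwise (η x) (hpos x)
  rw [integral_const_mul] at hmono
  have hexp : (0:ℝ) < Real.exp 1 := Real.exp_pos 1
  have hfinal : -(2 * Real.sqrt π / Real.exp 1) * Real.sqrt (1 + ∫ x, x ^ 2 * η x) ≤
      -(2 / Real.exp 1) * ∫ x, Real.sqrt (η x) := by
    have h1 : -(2 / Real.exp 1) * (Real.sqrt (1 + ∫ x, x ^ 2 * η x) * Real.sqrt π) ≤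
        -(2 / Real.exp 1) * ∫ x, Real.sqrt (η x) := by
      apply mul_le_mul_of_nonpos_left hCS'
      have : (0:ℝ) < 2 / Real.exp 1 := by positivity
      linarith
    calc -(2 * Real.sqrt π / Real.exp 1) * Real.sqrt (1 + ∫ x, x ^ 2 * η x)
        = -(2 / Real.exp 1) * (Real.sqrt (1 + ∫ x, x ^ 2 * η x) * Real.sqrt π) := by
          field_simp
      _ ≤ _ := h1
  exact le_trans hfinal hmono
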